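/- The unique L > 1 minimizing the function L ↦ ((L−1)/(L + 2√L + 1))^{log L} is L = 3 + 2√2; equivalently, with M₀(L) := (L+1)/(L−1), the map L ↦ (M₀(L) + √(M₀(L)²−1))^{−log L} is minimized over L > 1 at L = 3 + 2√2, where M₀ = √2 and M₀ + √(M₀²−1) = √2 + 1. -/

import Mathlib

noncomputable def F9 (L : ℝ) : ℝ := ((L - 1) / (L + 2 * Real.sqrt L + 1)) ^ Real.log L

noncomputable def M9 (L : ℝ) : ℝ := (L + 1) / (L - 1)

noncomputable def G9 (L : ℝ) : ℝ := (M9 L + Real.sqrt ((M9 L) ^ 2 - 1)) ^ (-Real.log L)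

open Real Set

noncomputable def ogrLam (T : ℝ) : ℝ := Real.log (T+1) - Real.log (T-1)
noncomputable def ogrPhi (T : ℝ) : ℝ := 2*T*Real.log T - (T^2-1)*ogrLam T
noncomputable def ogrPhi1 (T : ℝ) : ℝ := 2*Real.log T + 4 - 2*T*ogrLam T
noncomputable def ogrP (T : ℝ) : ℝ := Real.log T * ogrLam T
noncomputable def ogrTau : ℝ := 1 + Real.sqrt 2

lemma ogr_s2 : (Real.sqrt 2)^2 = 2 := Real.sq_sqrt (by norm_num)
lemma ogr_s2gt : 1 < Real.sqrt 2 := by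
  nlinarith [ogr_s2, Real.sqrt_nonneg 2]
lemma ogrTau_gt : 1 < ogrTau := by unfold ogrTau; nlinarith [ogr_s2gt]

lemma key_log_le {u : ℝ} (hu : 1 ≤ u) : Real.log u ≤ (u - u⁻¹)/2 := by
  have mono : MonotoneOn (fun u : ℝ => (u - u⁻¹)/2 - Real.log u) (Set.Ici 1) := by
    apply monotoneOn_of_deriv_nonneg (convex_Ici 1)
    · fun_prop (disch := intro x hx; simp at hx ⊢; nlinarith)
    · intro x hx
      simp only [interior_Ici, mem_Ioi] at hx
      have h0 : x ≠ 0 := by nlinarith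
      have hd : HasDerivAt (fun u : ℝ => (u - u⁻¹)/2 - Real.log u)
          ((1 - -(x^2)⁻¹)/2 - x⁻¹) x :=
        (((hasDerivAt_id x).sub (hasDerivAt_inv h0)).div_const 2).sub (Real.hasDerivAt_log h0)
      exact hd.differentiableAt.differentiableWithinAt
    · intro x hx
      simp only [interior_Ici, mem_Ioi] at hx
      have h0 : x ≠ 0 := by nlinarith
      have hd : HasDerivAt (fun u : ℝ => (u - u⁻¹)/2 - Real.log u)
          ((1 - -(x^2)⁻¹)/2 - x⁻¹) x :=
        (((hasDerivAt_id x).sub (hasDerivAt_inv h0)).div_const 2).sub (Real.hasDerivAt_log h0)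
      rw [hd.deriv]
      have : (1 - -(x^2)⁻¹)/2 - x⁻¹ = (x-1)^2/(2*x^2) := by
        field_simp; ring
      rw [this]; positivity
  have := mono (self_mem_Ici) hu hu
  simp at this
  linarith

lemma ogrLam_eq {T : ℝ} (hT : 1 < T) : ogrLam T = Real.log ((T+1)/(T-1)) := by
  rw [ogrLam, Real.log_div (by nlinarith) (by nlinarith)]

lemma ogrLam_le {T : ℝ} (hT : 1 < T) : ogrLam T ≤ 2*T/(T^2-1) := by
  have h1 : (0:ℝ) < T - 1 := by linarith
  have h2 : (0:ℝ) < T + 1 := by linarith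
  have h3 : (0:ℝ) < T^2 - 1 := by nlinarith
  have hu : 1 ≤ (T+1)/(T-1) := by
    rw [le_div_iff₀ h1]; linarith
  have := key_log_le hu
  rw [ogrLam_eq hT]
  have he : ((T+1)/(T-1) - ((T+1)/(T-1))⁻¹)/2 = 2*T/(T^2-1) := by
    rw [inv_div]
    field_simp [h1.ne', h2.ne', h3.ne']
    ring
  linarith [he ▸ this]

lemma ogr_hasDerivAt_Lam {x : ℝ} (hx : 1 < x) :
    HasDerivAt ogrLam (1/(x+1) - 1/(x-1)) x := by
  have h1 : HasDerivAt (fun y : ℝ => Real.log (y+1)) (1/(x+1)) x :=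
    (hasDerivAt_id' x |>.add_const 1).log (by nlinarith)
  have h2 : HasDerivAt (fun y : ℝ => Real.log (y-1)) (1/(x-1)) x :=
    (hasDerivAt_id' x |>.sub_const 1).log (by nlinarith)
  exact h1.sub h2

lemma ogr_hasDerivAt_Phi {x : ℝ} (hx : 1 < x) : HasDerivAt ogrPhi (ogrPhi1 x) x := by
  have hx0 : x ≠ 0 := by nlinarith
  have ha : (0:ℝ) < x - 1 := by linarith
  have hb : (0:ℝ) < x + 1 := by linarith
  have hc : (0:ℝ) < x^2 - 1 := by nlinarith
  have h1 : HasDerivAt (fun y : ℝ => 2*y*Real.log y) (2*Real.log x + 2) x := by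
    have := ((hasDerivAt_id' x).const_mul 2).mul (Real.hasDerivAt_log hx0)
    refine this.congr_deriv ?_
    field_simp
  have h2 : HasDerivAt (fun y : ℝ => (y^2-1)*ogrLam y)
      (2*x*ogrLam x + (x^2-1)*(1/(x+1) - 1/(x-1))) x := by
    have := (((hasDerivAt_pow 2 x).sub_const 1)).mul (ogr_hasDerivAt_Lam hx)
    refine this.congr_deriv ?_
    ring
  have := h1.sub h2
  refine this.congr_deriv ?_
  have e : (x^2-1)*(1/(x+1) - 1/(x-1)) = -2 := by
    field_simp [ha.ne', hb.ne']
    ring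
  rw [ogrPhi1, e]
  ring

lemma ogr_hasDerivAt_Phi1 {x : ℝ} (hx : 1 < x) :
    HasDerivAt ogrPhi1 (2/x + 4*x/(x^2-1) - 2*ogrLam x) x := by
  have hx0 : x ≠ 0 := by nlinarith
  have ha : (0:ℝ) < x - 1 := by linarith
  have hb : (0:ℝ) < x + 1 := by linarith
  have hc : (0:ℝ) < x^2 - 1 := by nlinarith
  have h1 : HasDerivAt (fun y : ℝ => 2*Real.log y + 4) (2/x) x := by
    have := ((Real.hasDerivAt_log hx0).const_mul 2).add_const 4
    exact this.congr_deriv (by ring)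
  have h2 : HasDerivAt (fun y : ℝ => 2*y*ogrLam y)
      (2*ogrLam x + 2*x*(1/(x+1) - 1/(x-1))) x := by
    have := ((hasDerivAt_id' x).const_mul 2).mul (ogr_hasDerivAt_Lam hx)
    refine this.congr_deriv ?_
    ring
  have := h1.sub h2
  refine this.congr_deriv ?_
  have e : 2*x*(1/(x+1) - 1/(x-1)) = -(4*x/(x^2-1)) := by
    rw [div_sub_div _ _ hb.ne' ha.ne']
    field_simp [hc.ne']
    ring
  rw [e]; ring

lemma ogr_hasDerivAt_P {x : ℝ} (hx : 1 < x) :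
    HasDerivAt ogrP (ogrLam x / x - 2*Real.log x/(x^2-1)) x := by
  have hx0 : x ≠ 0 := by nlinarith
  have ha : (0:ℝ) < x - 1 := by linarith
  have hb : (0:ℝ) < x + 1 := by linarith
  have hc : (0:ℝ) < x^2 - 1 := by nlinarith
  have := (Real.hasDerivAt_log hx0).mul (ogr_hasDerivAt_Lam hx)
  refine this.congr_deriv ?_
  have e : Real.log x * (1/(x+1) - 1/(x-1)) = -(2*Real.log x/(x^2-1)) := by
    rw [div_sub_div _ _ hb.ne' ha.ne']
    field_simp [hc.ne']
    ring
  rw [e]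
  ring

lemma ogr_tau_sub : ogrTau - 1 = Real.sqrt 2 := by unfold ogrTau; ring

lemma ogr_ratio_tau : (ogrTau + 1)/(ogrTau - 1) = ogrTau := by
  rw [ogr_tau_sub, div_eq_iff (by positivity : Real.sqrt 2 ≠ 0)]
  unfold ogrTau
  nlinarith [ogr_s2]

lemma ogrLam_tau : ogrLam ogrTau = Real.log ogrTau := by
  rw [ogrLam_eq ogrTau_gt, ogr_ratio_tau]

lemma ogr_diffble {x : ℝ} (hx : 1 < x) : DifferentiableAt ℝ ogrPhi1 x :=
  (ogr_hasDerivAt_Phi1 hx).differentiableAt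

lemma ogrPhi1_mono : MonotoneOn ogrPhi1 (Set.Ici ogrTau) := by
  apply monotoneOn_of_deriv_nonneg (convex_Ici _)
  · apply ContinuousOn.congr (f := ogrPhi1) ?_ (fun x hx => rfl)
    intro x hx
    exact (ogr_diffble (lt_of_lt_of_le ogrTau_gt hx)).continuousAt.continuousWithinAt
  · intro x hx
    simp only [interior_Ici, mem_Ioi] at hx
    exact (ogr_diffble (lt_trans ogrTau_gt hx)).differentiableWithinAt
  · intro x hx
    simp only [interior_Ici, mem_Ioi] at hx
    have hx1 : 1 < x := lt_trans ogrTau_gt hx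
    rw [(ogr_hasDerivAt_Phi1 hx1).deriv]
    have hle := ogrLam_le hx1
    have hc : (0:ℝ) < x^2 - 1 := by nlinarith
    have h0 : (0:ℝ) < x := by linarith
    have : 2*ogrLam x ≤ 4*x/(x^2-1) := by
      have h2 : ogrLam x * (x^2-1) ≤ 2*x := (le_div_iff₀ hc).mp hle
      rw [le_div_iff₀ hc]
      nlinarith
    have : 0 < 2/x := by positivity
    linarith

lemma ogrPhi1_tau_pos : 0 < ogrPhi1 ogrTau := by
  have hlog : Real.log ogrTau < Real.sqrt 2 := by
    have := Real.log_lt_sub_one_of_pos (x := ogrTau) (by linarith [ogrTau_gt]) (by linarith [ogrTau_gt])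
    rw [ogr_tau_sub] at this
    linarith
  have hpos : 0 < Real.log ogrTau := Real.log_pos ogrTau_gt
  have ht : ogrTau = 1 + Real.sqrt 2 := rfl
  rw [ogrPhi1, ogrLam_tau]
  nlinarith [ogr_s2, ogr_s2gt, hlog, hpos, ht]

lemma ogrPhi1_pos {x : ℝ} (hx : ogrTau ≤ x) : 0 < ogrPhi1 x :=
  lt_of_lt_of_le ogrPhi1_tau_pos (ogrPhi1_mono self_mem_Ici hx hx)

lemma ogrPhi_strict : StrictMonoOn ogrPhi (Set.Ici ogrTau) := by
  apply strictMonoOn_of_deriv_pos (convex_Ici _)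
  · apply ContinuousOn.congr (f := ogrPhi) ?_ (fun x hx => rfl)
    intro x hx
    exact (ogr_hasDerivAt_Phi (lt_of_lt_of_le ogrTau_gt hx)).differentiableAt.continuousAt.continuousWithinAt
  · intro x hx
    simp only [interior_Ici, mem_Ioi] at hx
    have hx1 : 1 < x := lt_trans ogrTau_gt hx
    rw [(ogr_hasDerivAt_Phi hx1).deriv]
    exact ogrPhi1_pos hx.le

lemma ogrPhi_tau : ogrPhi ogrTau = 0 := by
  rw [ogrPhi, ogrLam_tau]
  have : ogrTau^2 - 1 = 2*ogrTau := by unfold ogrTau; nlinarith [ogr_s2]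
  rw [this]
  ring

lemma ogrPhi_pos {x : ℝ} (hx : ogrTau < x) : 0 < ogrPhi x := by
  have := ogrPhi_strict self_mem_Ici (le_of_lt (mem_Ioi.mp hx) : ogrTau ≤ x) hx
  rwa [ogrPhi_tau] at this

lemma ogrP_anti : StrictAntiOn ogrP (Set.Ici ogrTau) := by
  apply strictAntiOn_of_deriv_neg (convex_Ici _)
  · apply ContinuousOn.congr (f := ogrP) ?_ (fun x hx => rfl)
    intro x hx
    exact (ogr_hasDerivAt_P (lt_of_lt_of_le ogrTau_gt hx)).differentiableAt.continuousAt.continuousWithinAt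
  · intro x hx
    simp only [interior_Ici, mem_Ioi] at hx
    have hx1 : 1 < x := lt_trans ogrTau_gt hx
    rw [(ogr_hasDerivAt_P hx1).deriv]
    have hphi := ogrPhi_pos hx
    have hc : (0:ℝ) < x^2 - 1 := by nlinarith
    have h0 : (0:ℝ) < x := by linarith
    rw [sub_neg, div_lt_div_iff₀ h0 hc]
    rw [ogrPhi] at hphi
    nlinarith

lemma ogr_invol {T : ℝ} (hT : 1 < T) : ogrP ((T+1)/(T-1)) = ogrP T := by
  have h1 : (0:ℝ) < T - 1 := by linarith
  have hS : 1 < (T+1)/(T-1) := by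
    rw [lt_div_iff₀ h1]; linarith
  have hSr : ((T+1)/(T-1) + 1)/((T+1)/(T-1) - 1) = T := by
    rw [div_add_one h1.ne', div_sub_one h1.ne', div_div_div_cancel_right₀]
    · have h2 : (T+1-(T-1)) = 2 := by ring
      rw [h2]; ring
    · exact h1.ne'
  rw [ogrP, ogrP, ogrLam_eq hS, hSr, ogrLam_eq hT]
  ring

lemma ogr_tau_sq : ogrTau^2 = 2*ogrTau + 1 := by
  unfold ogrTau; nlinarith [ogr_s2]

lemma ogr_S_gt {T : ℝ} (hT : 1 < T) (hlt : T < ogrTau) : ogrTau < (T+1)/(T-1) := by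
  have h1 : (0:ℝ) < T - 1 := by linarith
  rw [lt_div_iff₀ h1]
  nlinarith [ogr_tau_sq, ogrTau_gt]

lemma ogrP_le {T : ℝ} (hT : 1 < T) : ogrP T ≤ ogrP ogrTau := by
  rcases lt_trichotomy T ogrTau with h | h | h
  · have hS := ogr_S_gt hT h
    rw [← ogr_invol hT]
    exact le_of_lt (ogrP_anti self_mem_Ici (le_of_lt hS) hS)
  · rw [h]
  · exact le_of_lt (ogrP_anti self_mem_Ici (le_of_lt h) h)

lemma ogrP_eq {T : ℝ} (hT : 1 < T) (h : ogrP T = ogrP ogrTau) : T = ogrTau := by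
  rcases lt_trichotomy T ogrTau with hc | hc | hc
  · have hS := ogr_S_gt hT hc
    have := ogrP_anti self_mem_Ici (le_of_lt hS) hS
    rw [ogr_invol hT, h] at this
    exact absurd this (lt_irrefl _)
  · exact hc
  · have := ogrP_anti self_mem_Ici (le_of_lt hc) hc
    rw [h] at this
    exact absurd this (lt_irrefl _)

lemma ogr_ratio_inv {t : ℝ} (ht : 1 < t) : ((t+1)/(t-1) + 1)/((t+1)/(t-1) - 1) = t := by
  have h1 : (0:ℝ) < t - 1 := by linarith
  rw [div_add_one h1.ne', div_sub_one h1.ne', div_div_div_cancel_right₀]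
  · have h2 : (t+1-(t-1)) = 2 := by ring
    rw [h2]; ring
  · exact h1.ne'

lemma F9_eq {L : ℝ} (hL : 1 < L) :
    F9 L = Real.exp (-2 * ogrP ((Real.sqrt L + 1)/(Real.sqrt L - 1))) := by
  set t := Real.sqrt L with htdef
  have ht0 : 0 ≤ t := Real.sqrt_nonneg L
  have htL : t^2 = L := Real.sq_sqrt (by linarith)
  have ht1 : 1 < t := by nlinarith
  have h1 : (0:ℝ) < t - 1 := by linarith
  set T := (t+1)/(t-1) with hTdef
  have hT : 1 < T := by rw [hTdef, lt_div_iff₀ h1]; linarith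
  have hden : (0:ℝ) < L + 2*t + 1 := by nlinarith
  have hbase : (L - 1)/(L + 2*t + 1) = (t-1)/(t+1) := by
    rw [div_eq_div_iff (by nlinarith) (by linarith)]
    nlinarith [htL]
  have hbpos : (0:ℝ) < (L - 1)/(L + 2*t + 1) := by
    rw [hbase]; positivity
  rw [F9, Real.rpow_def_of_pos hbpos]
  congr 1
  have hlogb : Real.log ((L-1)/(L+2*t+1)) = -(Real.log T) := by
    rw [hbase, ← Real.log_inv]
    congr 1
    rw [hTdef, inv_div]
  have hLam : ogrLam T = Real.log t := by
    rw [ogrLam_eq hT, hTdef, ogr_ratio_inv ht1]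
  have hlogL : Real.log L = 2 * Real.log t := by
    rw [← htL, Real.log_pow]; push_cast; ring
  rw [hlogb, hlogL, ogrP, hLam]
  ring

lemma ogr_tau_sq' : ogrTau^2 = 3 + 2*Real.sqrt 2 := by
  unfold ogrTau; nlinarith [ogr_s2]

lemma ogr_sqrt_Lstar : Real.sqrt (3 + 2*Real.sqrt 2) = ogrTau := by
  rw [← ogr_tau_sq', Real.sqrt_sq (by linarith [ogrTau_gt])]

lemma ogr_Lstar_gt : (1:ℝ) < 3 + 2*Real.sqrt 2 := by nlinarith [ogr_s2gt]

lemma F9_star : F9 (3 + 2*Real.sqrt 2) = Real.exp (-2 * ogrP ogrTau) := by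
  rw [F9_eq ogr_Lstar_gt, ogr_sqrt_Lstar, ogr_ratio_tau]

lemma G9_eq_F9 {L : ℝ} (hL : 1 < L) : G9 L = F9 L := by
  have hL1 : (0:ℝ) < L - 1 := by linarith
  have ht0 : (0:ℝ) ≤ Real.sqrt L := Real.sqrt_nonneg L
  have htL : (Real.sqrt L)^2 = L := Real.sq_sqrt (by linarith)
  have ht1 : 1 < Real.sqrt L := by nlinarith
  have hden : (0:ℝ) < L + 2*Real.sqrt L + 1 := by nlinarith
  have hM : (M9 L)^2 - 1 = (2*Real.sqrt L/(L-1))^2 := by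
    rw [M9]
    field_simp
    nlinarith [htL]
  have hsq : Real.sqrt ((M9 L)^2 - 1) = 2*Real.sqrt L/(L-1) := by
    rw [hM, Real.sqrt_sq (by positivity)]
  have hsum : M9 L + Real.sqrt ((M9 L)^2 - 1) = ((L-1)/(L + 2*Real.sqrt L + 1))⁻¹ := by
    rw [hsq, M9, inv_div, ← add_div]
    congr 1
    ring
  have hbpos : (0:ℝ) < (L - 1)/(L + 2*Real.sqrt L + 1) := by positivity
  rw [G9, hsum, F9, Real.inv_rpow hbpos.le, Real.rpow_neg hbpos.le, inv_inv]

lemma ogr_T_gt {L : ℝ} (hL : 1 < L) : 1 < (Real.sqrt L + 1)/(Real.sqrt L - 1) := by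
  have ht0 : 0 ≤ Real.sqrt L := Real.sqrt_nonneg L
  have htL : (Real.sqrt L)^2 = L := Real.sq_sqrt (by linarith)
  have ht1 : 1 < Real.sqrt L := by nlinarith
  rw [lt_div_iff₀ (by linarith)]
  linarith

/-- The unique minimizer over `L > 1` of `L ↦ ((L-1)/(L+2√L+1))^{log L}` is `L = 3+2√2`;
equivalently `L ↦ (M₀(L)+√(M₀(L)²-1))^{-log L}` with `M₀(L)=(L+1)/(L-1)` is minimized
there, where `M₀ = √2` and `M₀+√(M₀²-1) = √2+1`. -/
theorem optimal_geometric_ratio :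
    (∀ L : ℝ, 1 < L → F9 (3 + 2 * Real.sqrt 2) ≤ F9 L) ∧
    (∀ L : ℝ, 1 < L → F9 L = F9 (3 + 2 * Real.sqrt 2) → L = 3 + 2 * Real.sqrt 2) ∧
    (∀ L : ℝ, 1 < L → G9 (3 + 2 * Real.sqrt 2) ≤ G9 L) ∧
    (∀ L : ℝ, 1 < L → G9 L = G9 (3 + 2 * Real.sqrt 2) → L = 3 + 2 * Real.sqrt 2) ∧
    M9 (3 + 2 * Real.sqrt 2) = Real.sqrt 2 ∧
    M9 (3 + 2 * Real.sqrt 2) + Real.sqrt ((M9 (3 + 2 * Real.sqrt 2)) ^ 2 - 1) =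
      Real.sqrt 2 + 1 := by
  have hmin : ∀ L : ℝ, 1 < L → F9 (3 + 2 * Real.sqrt 2) ≤ F9 L := by
    intro L hL
    rw [F9_star, F9_eq hL, Real.exp_le_exp]
    have := ogrP_le (ogr_T_gt hL)
    linarith
  have huniq : ∀ L : ℝ, 1 < L → F9 L = F9 (3 + 2 * Real.sqrt 2) → L = 3 + 2 * Real.sqrt 2 := by
    intro L hL h
    rw [F9_star, F9_eq hL] at h
    have hP : ogrP ((Real.sqrt L + 1)/(Real.sqrt L - 1)) = ogrP ogrTau := by
      have := Real.exp_injective h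
      linarith
    have hT := ogrP_eq (ogr_T_gt hL) hP
    have ht0 : 0 ≤ Real.sqrt L := Real.sqrt_nonneg L
    have htL : (Real.sqrt L)^2 = L := Real.sq_sqrt (by linarith)
    have ht1 : 1 < Real.sqrt L := by nlinarith
    have hinv := ogr_ratio_inv ht1
    rw [hT, ogr_ratio_tau] at hinv
    rw [← htL, ← hinv, ogr_tau_sq']
  have hM : M9 (3 + 2 * Real.sqrt 2) = Real.sqrt 2 := by
    rw [M9, div_eq_iff (by nlinarith [ogr_s2gt])]
    nlinarith [ogr_s2]
  refine ⟨hmin, huniq, ?_, ?_, hM, ?_⟩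
  · intro L hL
    rw [G9_eq_F9 hL, G9_eq_F9 ogr_Lstar_gt]
    exact hmin L hL
  · intro L hL h
    rw [G9_eq_F9 hL, G9_eq_F9 ogr_Lstar_gt] at h
    exact huniq L hL h
  · rw [hM, ogr_s2]
    norm_num
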